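/- Let α₁, α₂, α₃ > 0 with α₁ + α₂ + α₃ = 1, and let t₁, t₂ be real numbers. Let ν = α₁ • gaussianReal(t₁, 1) + α₂ • gaussianReal(t₂, 1) + α₃ • gaussianReal(0, 1) be a one-dimensional three-component Gaussian mixture, with mean m = ∫ x dν = α₁t₁ + α₂t₂, and set c₁ = t₁ − m, c₂ = t₂ − m, c₃ = −m. Then ∫ (x − m)⁴ dν = 3 (∫ (x − m)² dν)² if and only if α₁(3α₁ − 1)c₁⁴ + α₂(3α₂ − 1)c₂⁴ + α₃(3α₃ − 1)c₃⁴ + 6α₁α₂c₁²c₂² + 6α₁α₃c₁²c₃² + 6α₂α₃c₂²c₃² = 0. -/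

import Mathlib

open MeasureTheory ProbabilityTheory
open Real Filter

noncomputable def Eg (x : ℝ) : ℝ := rexp (-x ^ 2 / 2)

lemma Eg_eq (x : ℝ) : Eg x = rexp (-(1/2 : ℝ) * x ^ 2) := by unfold Eg; ring_nf

lemma intg (n : ℕ) : Integrable fun x : ℝ => x ^ n * Eg x := by
  have h := integrable_rpow_mul_exp_neg_mul_sq (b := (1/2:ℝ)) (by norm_num)
    (s := (n:ℝ)) (lt_of_lt_of_le neg_one_lt_zero (Nat.cast_nonneg n))
  simp_rw [Eg_eq]
  simpa [Real.rpow_natCast] using h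

lemma hasDerivEg (x : ℝ) : HasDerivAt Eg (-x * Eg x) x := by
  have h1 : HasDerivAt (fun x : ℝ => -x ^ 2 / 2) (-x) x := by
    have h := ((hasDerivAt_pow 2 x).neg.div_const 2)
    exact h.congr_deriv (by norm_num; ring)
  have := h1.exp
  show HasDerivAt (fun x => rexp (-x ^ 2 / 2)) _ x
  simpa [Eg, mul_comm] using this

lemma momrec (n : ℕ) :
    ∫ x : ℝ, x ^ (n + 2) * Eg x = (n + 1 : ℝ) * ∫ x : ℝ, x ^ n * Eg x := by
  have hd : ∀ x : ℝ, HasDerivAt (fun y : ℝ => y ^ (n + 1) * Eg y)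
      ((n + 1 : ℝ) * (x ^ n * Eg x) - x ^ (n + 2) * Eg x) x := by
    intro x
    have h := (hasDerivAt_pow (n + 1) x).mul (hasDerivEg x)
    exact h.congr_deriv (by simp only [Nat.add_sub_cancel]; push_cast; ring)
  have hint : Integrable fun x : ℝ =>
      (n + 1 : ℝ) * (x ^ n * Eg x) - x ^ (n + 2) * Eg x :=
    ((intg n).const_mul _).sub (intg (n + 2))
  have h0 := integral_eq_zero_of_hasDerivAt_of_integrable hd hint (intg (n + 1))
  rw [integral_sub ((intg n).const_mul _) (intg (n + 2)), integral_const_mul] at h0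
  linarith

lemma oddzero (n : ℕ) (hn : Odd n) : ∫ x : ℝ, x ^ n * Eg x = 0 := by
  have h := integral_neg_eq_self (fun x : ℝ => x ^ n * Eg x) volume
  have : ∀ x : ℝ, (-x) ^ n * Eg (-x) = -(x ^ n * Eg x) := by
    intro x
    rw [hn.neg_pow]
    unfold Eg
    ring_nf
  simp_rw [this, integral_neg] at h
  linarith

lemma mom0 : ∫ x : ℝ, Eg x = Real.sqrt (2 * π) := by
  simp_rw [Eg_eq]
  rw [integral_gaussian]
  norm_num [mul_comm]

lemma mom0' : ∫ x : ℝ, x ^ 0 * Eg x = Real.sqrt (2 * π) := by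
  simpa using mom0

lemma mom2 : ∫ x : ℝ, x ^ 2 * Eg x = Real.sqrt (2 * π) := by
  have h := momrec 0
  rw [mom0'] at h
  simpa using h

lemma mom4 : ∫ x : ℝ, x ^ 4 * Eg x = 3 * Real.sqrt (2 * π) := by
  have h := momrec 2
  rw [mom2] at h
  rw [h]
  norm_num

lemma gauss_pdf_eq (x : ℝ) :
    gaussianPDFReal 0 1 x = (Real.sqrt (2 * π))⁻¹ * Eg x := by
  unfold gaussianPDFReal Eg
  norm_num

lemma gauss_int (g : ℝ → ℝ) :
    ∫ x, g x ∂(gaussianReal 0 1) = (Real.sqrt (2 * π))⁻¹ * ∫ x, g x * Eg x := by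
  rw [gaussianReal_of_var_ne_zero 0 one_ne_zero, gaussianPDF_def]
  simp_rw [ENNReal.ofReal]
  rw [integral_withDensity_eq_integral_smul
    ((measurable_gaussianPDFReal 0 1).real_toNNReal) g]
  rw [← integral_const_mul]
  congr 1
  funext x
  rw [NNReal.smul_def, Real.coe_toNNReal _ (gaussianPDFReal_nonneg 0 1 x), gauss_pdf_eq,
    smul_eq_mul]
  ring

lemma intG (n : ℕ) : Integrable (fun x : ℝ => x ^ n) (gaussianReal 0 1) := by
  rw [gaussianReal_of_var_ne_zero 0 one_ne_zero]
  rw [integrable_withDensity_iff (measurable_gaussianPDF 0 1)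
    (Filter.Eventually.of_forall fun x => ENNReal.ofReal_lt_top)]
  have e : ∀ x : ℝ, x ^ n * (gaussianPDF 0 1 x).toReal
      = (Real.sqrt (2 * π))⁻¹ * (x ^ n * Eg x) := by
    intro x
    rw [gaussianPDF, ENNReal.toReal_ofReal (gaussianPDFReal_nonneg 0 1 x), gauss_pdf_eq]
    ring
  simp_rw [e]
  exact (intg n).const_mul _

lemma sqrt2pi_pos : 0 < Real.sqrt (2 * π) :=
  Real.sqrt_pos.mpr (by positivity)

lemma G1 : ∫ x, x ^ 1 ∂(gaussianReal 0 1) = 0 := by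
  rw [gauss_int (fun x => x ^ 1), oddzero 1 ⟨0, by norm_num⟩, mul_zero]

lemma G3 : ∫ x, x ^ 3 ∂(gaussianReal 0 1) = 0 := by
  rw [gauss_int (fun x => x ^ 3), oddzero 3 ⟨1, by norm_num⟩, mul_zero]

lemma G2 : ∫ x, x ^ 2 ∂(gaussianReal 0 1) = 1 := by
  rw [gauss_int (fun x => x ^ 2), mom2, inv_mul_cancel₀ (ne_of_gt sqrt2pi_pos)]

lemma G4 : ∫ x, x ^ 4 ∂(gaussianReal 0 1) = 3 := by
  rw [gauss_int (fun x => x ^ 4), mom4]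
  field_simp

lemma cpow2 (c : ℝ) : ∫ x, (x + c) ^ 2 ∂(gaussianReal 0 1) = 1 + c ^ 2 := by
  have e : ∀ x : ℝ, (x + c) ^ 2 = x ^ 2 + (2 * c) * x ^ 1 + c ^ 2 := fun x => by ring
  simp_rw [e]
  have i1 : Integrable (fun x : ℝ => x ^ 2 + 2 * c * x ^ 1) (gaussianReal 0 1) :=
    (intG 2).add ((intG 1).const_mul _)
  rw [integral_add i1 (integrable_const _),
    integral_add (intG 2) ((intG 1).const_mul _), integral_const_mul, G1, G2,
    integral_const]
  simp

lemma cpow4 (c : ℝ) :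
    ∫ x, (x + c) ^ 4 ∂(gaussianReal 0 1) = 3 + 6 * c ^ 2 + c ^ 4 := by
  have e : ∀ x : ℝ, (x + c) ^ 4 = x ^ 4 + (4 * c) * x ^ 3 + (6 * c ^ 2) * x ^ 2
      + (4 * c ^ 3) * x ^ 1 + c ^ 4 := fun x => by ring
  simp_rw [e]
  have i4 : Integrable (fun x : ℝ => x ^ 4 + 4 * c * x ^ 3) (gaussianReal 0 1) :=
    (intG 4).add ((intG 3).const_mul _)
  have i3 : Integrable (fun x : ℝ => x ^ 4 + 4 * c * x ^ 3 + 6 * c ^ 2 * x ^ 2)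
      (gaussianReal 0 1) := i4.add ((intG 2).const_mul _)
  have i2 : Integrable
      (fun x : ℝ => x ^ 4 + 4 * c * x ^ 3 + 6 * c ^ 2 * x ^ 2 + 4 * c ^ 3 * x ^ 1)
      (gaussianReal 0 1) := i3.add ((intG 1).const_mul _)
  rw [integral_add i2 (integrable_const _),
    integral_add i3 ((intG 1).const_mul _),
    integral_add i4 ((intG 2).const_mul _),
    integral_add (intG 4) ((intG 3).const_mul _),
    integral_const_mul, integral_const_mul, integral_const_mul,
    G1, G2, G3, G4, integral_const]
  simp

lemma gauss_map (t : ℝ) : gaussianReal t 1 = (gaussianReal 0 1).map (· + t) := by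
  rw [gaussianReal_map_add_const, zero_add]

lemma intG_shift (c : ℝ) (k : ℕ) :
    Integrable (fun x : ℝ => (x + c) ^ k) (gaussianReal 0 1) := by
  have e : (fun x : ℝ => (x + c) ^ k)
      = fun x => ∑ i ∈ Finset.range (k + 1), x ^ i * c ^ (k - i) * (k.choose i : ℝ) :=
    funext fun x => add_pow x c k
  rw [e]
  exact integrable_finset_sum _ fun i _ => ((intG i).mul_const _).mul_const _

lemma int_shift (t m : ℝ) (k : ℕ) :
    Integrable (fun x : ℝ => (x - m) ^ k) (gaussianReal t 1) := by
  rw [gauss_map t, integrable_map_measure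
    (Continuous.aestronglyMeasurable (by continuity))
    (measurable_add_const t).aemeasurable]
  have e : ((fun x : ℝ => (x - m) ^ k) ∘ (· + t)) = fun x => (x + (t - m)) ^ k := by
    funext x
    simp only [Function.comp]
    ring_nf
  rw [e]
  exact intG_shift _ _

lemma val2 (t m : ℝ) : ∫ x, (x - m) ^ 2 ∂(gaussianReal t 1) = 1 + (t - m) ^ 2 := by
  rw [gauss_map t, integral_map (measurable_add_const t).aemeasurable
    (Continuous.aestronglyMeasurable (by continuity))]
  simp_rw [show ∀ x : ℝ, x + t - m = x + (t - m) from fun x => by ring]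
  exact cpow2 _

lemma val4 (t m : ℝ) : ∫ x, (x - m) ^ 4 ∂(gaussianReal t 1)
    = 3 + 6 * (t - m) ^ 2 + (t - m) ^ 4 := by
  rw [gauss_map t, integral_map (measurable_add_const t).aemeasurable
    (Continuous.aestronglyMeasurable (by continuity))]
  simp_rw [show ∀ x : ℝ, x + t - m = x + (t - m) from fun x => by ring]
  exact cpow4 _


/-- For a three-component one-dimensional Gaussian mixture
`ν = α₁ • N(t₁,1) + α₂ • N(t₂,1) + α₃ • N(0,1)` with mean `m = α₁t₁ + α₂t₂`,
the centered kurtosis condition `∫ (x−m)⁴ dν = 3 (∫ (x−m)² dν)²` holds iff the quartic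
expression in the centered centers vanishes. -/
theorem gaussian_mixture_kurtosis_condition (α₁ α₂ α₃ t₁ t₂ : ℝ)
    (h₁ : 0 < α₁) (h₂ : 0 < α₂) (h₃ : 0 < α₃) (hsum : α₁ + α₂ + α₃ = 1)
    (ν : Measure ℝ)
    (hν : ν = ENNReal.ofReal α₁ • gaussianReal t₁ 1 +
        ENNReal.ofReal α₂ • gaussianReal t₂ 1 +
        ENNReal.ofReal α₃ • gaussianReal 0 1)
    (m : ℝ) (hm : m = α₁ * t₁ + α₂ * t₂)
    (c₁ c₂ c₃ : ℝ) (hc₁ : c₁ = t₁ - m) (hc₂ : c₂ = t₂ - m) (hc₃ : c₃ = -m) :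
    ∫ x, (x - m) ^ 4 ∂ν = 3 * (∫ x, (x - m) ^ 2 ∂ν) ^ 2 ↔
      α₁ * (3 * α₁ - 1) * c₁ ^ 4 + α₂ * (3 * α₂ - 1) * c₂ ^ 4 +
        α₃ * (3 * α₃ - 1) * c₃ ^ 4 + 6 * α₁ * α₂ * c₁ ^ 2 * c₂ ^ 2 +
        6 * α₁ * α₃ * c₁ ^ 2 * c₃ ^ 2 + 6 * α₂ * α₃ * c₂ ^ 2 * c₃ ^ 2 = 0 := by
  have key : ∀ k : ℕ, ∫ x, (x - m) ^ k ∂ν =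
      α₁ * ∫ x, (x - m) ^ k ∂(gaussianReal t₁ 1) +
      α₂ * ∫ x, (x - m) ^ k ∂(gaussianReal t₂ 1) +
      α₃ * ∫ x, (x - m) ^ k ∂(gaussianReal 0 1) := by
    intro k
    rw [hν]
    rw [integral_add_measure
      (((int_shift t₁ m k).smul_measure ENNReal.ofReal_ne_top).add_measure
        ((int_shift t₂ m k).smul_measure ENNReal.ofReal_ne_top))
      ((int_shift 0 m k).smul_measure ENNReal.ofReal_ne_top),
      integral_add_measure ((int_shift t₁ m k).smul_measure ENNReal.ofReal_ne_top)
        ((int_shift t₂ m k).smul_measure ENNReal.ofReal_ne_top),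
      integral_smul_measure, integral_smul_measure, integral_smul_measure,
      ENNReal.toReal_ofReal h₁.le, ENNReal.toReal_ofReal h₂.le,
      ENNReal.toReal_ofReal h₃.le, smul_eq_mul, smul_eq_mul, smul_eq_mul]
  have h2 := key 2
  have h4 := key 4
  rw [val2 t₁ m, val2 t₂ m, val2 0 m] at h2
  rw [val4 t₁ m, val4 t₂ m, val4 0 m] at h4
  rw [h2, h4]
  subst hc₁ hc₂ hc₃
  have h3 : α₃ = 1 - α₁ - α₂ := by linarith
  subst h3
  constructor <;> intro h <;> linear_combination -h
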